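/- Let s ≥ 0 and b > (s + 1/2)/2 with b > 1/2. Then there is a constant C such that for all τ with |τ| > 1, ∫_0^∞ dz / (⟨z⟩^s ⟨z + τ⟩^{2b} z^{1/2}) ≤ C ⟨τ⟩^{-(s + 1/2)}. -/

import Mathlib

open MeasureTheory

noncomputable def jb (x : ℝ) : ℝ := Real.sqrt (1 + x ^ 2)

lemma jb_pos (x : ℝ) : 0 < jb x := Real.sqrt_pos.mpr (by positivity)

lemma one_le_jb (x : ℝ) : 1 ≤ jb x := by
  rw [show (1:ℝ) = Real.sqrt 1 by simp [Real.sqrt_one]]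
  exact Real.sqrt_le_sqrt (by nlinarith [sq_nonneg x])

lemma abs_le_jb (x : ℝ) : |x| ≤ jb x := by
  rw [show |x| = Real.sqrt (x^2) by rw [Real.sqrt_sq_eq_abs]]
  exact Real.sqrt_le_sqrt (by nlinarith)

lemma jb_eq_rpow (x : ℝ) : jb x = (1 + x ^ 2) ^ (1/2 : ℝ) := by
  rw [jb, Real.sqrt_eq_rpow]

lemma jb_rpow (x r : ℝ) : jb x ^ r = (1 + x ^ 2) ^ (r / 2) := by
  rw [jb_eq_rpow, ← Real.rpow_mul (by positivity)]; ring_nf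

lemma jb_mono {x y : ℝ} (h : |x| ≤ |y|) : jb x ≤ jb y := by
  apply Real.sqrt_le_sqrt
  have : x^2 ≤ y^2 := by
    rw [← sq_abs x, ← sq_abs y]; exact pow_le_pow_left₀ (abs_nonneg x) h 2
  linarith

lemma jb_abs (x : ℝ) : jb |x| = jb x := by rw [jb, jb, sq_abs]

lemma jb_half (x : ℝ) : jb x ≤ 2 * jb (x/2) := by
  have h4 : Real.sqrt 4 = 2 := by
    rw [show (4:ℝ)=2^2 by norm_num, Real.sqrt_sq (by norm_num)]
  have : (2:ℝ) * jb (x/2) = Real.sqrt (4*(1+(x/2)^2)) := by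
    rw [jb, Real.sqrt_mul (by norm_num : (0:ℝ) ≤ 4), h4]
  rw [this, jb]
  exact Real.sqrt_le_sqrt (by nlinarith [sq_nonneg x])

lemma jb_le_sqrt2_mul_abs {x : ℝ} (h : 1 ≤ |x|) : jb x ≤ Real.sqrt 2 * |x| := by
  rw [jb, show Real.sqrt 2 * |x| = Real.sqrt (2 * x^2) by
    rw [Real.sqrt_mul (by norm_num), Real.sqrt_sq_eq_abs]]
  apply Real.sqrt_le_sqrt
  nlinarith [one_le_sq_iff_one_le_abs x |>.mpr h]

set_option maxHeartbeats 2000000 in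
theorem stmt_6 (s b : ℝ) (hs : 0 ≤ s) (hb : (s + 1/2) / 2 < b) (hb' : 1/2 < b) :
    ∃ C : ℝ, ∀ τ : ℝ, 1 < |τ| →
      ∫ z in Set.Ioi (0:ℝ), 1 / (jb z ^ s * jb (z + τ) ^ (2 * b) * Real.sqrt z)
        ≤ C * jb τ ^ (-(s + 1/2)) := by
  have hcont_jb : Continuous jb := by
    unfold jb; fun_prop
  set s' : ℝ := max 0 (s + 1 - 2*b) with hs'def
  have hs'0 : 0 ≤ s' := le_max_left _ _
  have hs's : s' ≤ s := max_le hs (by linarith)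
  have hs'h : s' < 1/2 := max_lt (by norm_num) (by linarith)
  have hinv0 : (0:ℝ) < 1/2 - s' := by linarith
  have hs'ge : s + 1 - 2*b ≤ s' := le_max_right _ _
  have hK2int : Integrable (fun u : ℝ => ((1:ℝ) + u^2) ^ (-b)) := by
    have := integrable_rpow_neg_one_add_norm_sq (E := ℝ) (μ := volume) (r := 2*b)
      (by simpa using (by linarith : (1:ℝ) < 2*b))
    simpa [Real.norm_eq_abs, sq_abs, neg_div, mul_div_assoc] using this
  have hK2nn : 0 ≤ ∫ u : ℝ, ((1:ℝ) + u^2) ^ (-b) :=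
    integral_nonneg fun u => Real.rpow_nonneg (by positivity) _
  set K2 : ℝ := ∫ u : ℝ, ((1:ℝ) + u^2) ^ (-b) with hK2def
  refine ⟨2^(2*b) * (2 + (1/2 - s')⁻¹) + 2^(s + 3/4) * K2, fun τ hτ => ?_⟩
  have hjτ1 : 1 ≤ jb τ := one_le_jb τ
  have hjτ0 : 0 < jb τ := jb_pos τ
  set F : ℝ → ℝ := fun z => 1 / (jb z ^ s * jb (z + τ) ^ (2 * b) * Real.sqrt z) with hF
  set T : ℝ := |τ| / 2 with hTdef
  have hT0 : 0 < T := by rw [hTdef]; linarith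
  set M : ℝ := max T 1 with hMdef
  have hM1 : (1:ℝ) ≤ M := le_max_right _ _
  have hM0 : (0:ℝ) < M := by linarith
  have hMτ : M ≤ jb τ := max_le (by have := abs_le_jb τ; rw [hTdef]; linarith) hjτ1
  -- measurability of F
  have hFmeas : Measurable F := by
    have hcD : Continuous fun z : ℝ => jb z ^ s * jb (z + τ) ^ (2*b) * Real.sqrt z := by
      refine ((Continuous.mul ?_ ?_).mul Real.continuous_sqrt)
      · exact hcont_jb.rpow_const (fun x => Or.inl (jb_pos x).ne')
      · exact (hcont_jb.comp (continuous_id.add continuous_const)).rpow_const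
          (fun x => Or.inl (jb_pos _).ne')
    rw [hF]; simp only [one_div]; exact hcD.measurable.inv
  have hFnn : ∀ z, 0 ≤ F z := by
    intro z; rw [hF]
    have h1 : (0:ℝ) ≤ jb z ^ s := Real.rpow_nonneg (jb_pos z).le _
    have h2 : (0:ℝ) ≤ jb (z+τ) ^ (2*b) := Real.rpow_nonneg (jb_pos _).le _
    have h3 : (0:ℝ) ≤ Real.sqrt z := Real.sqrt_nonneg z
    positivity
  -- the low-region auxiliary function
  set h1 : ℝ → ℝ := fun z => z ^ (-(1/2):ℝ) * jb z ^ (-s') with hh1def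
  have hh1c : ContinuousOn h1 (Set.Ioi (0:ℝ)) := by
    apply ContinuousOn.mul
    · exact ContinuousOn.rpow_const continuousOn_id (fun x hx => Or.inl (ne_of_gt hx))
    · exact (hcont_jb.rpow_const (fun x => Or.inl (jb_pos x).ne')).continuousOn
  have hint_half : IntegrableOn (fun z : ℝ => z ^ (-(1/2):ℝ)) (Set.Ioc 0 M) :=
    (intervalIntegrable_iff_integrableOn_Ioc_of_le hM0.le).mp
      (intervalIntegral.intervalIntegrable_rpow' (by norm_num))
  have hint_h1 : IntegrableOn h1 (Set.Ioc 0 M) := by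
    apply hint_half.mono' ((hh1c.mono Set.Ioc_subset_Ioi_self).aestronglyMeasurable
      measurableSet_Ioc)
    refine ae_restrict_of_forall_mem measurableSet_Ioc (fun z hz => ?_)
    have hz0 : 0 < z := hz.1
    rw [Real.norm_eq_abs, abs_of_nonneg (mul_nonneg (Real.rpow_nonneg hz0.le _)
      (Real.rpow_nonneg (jb_pos z).le _))]
    have : jb z ^ (-s') ≤ 1 :=
      Real.rpow_le_one_of_one_le_of_nonpos (one_le_jb z) (by linarith)
    calc z ^ (-(1/2):ℝ) * jb z ^ (-s') ≤ z ^ (-(1/2):ℝ) * 1 := by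
          have : (0:ℝ) ≤ z ^ (-(1/2):ℝ) := Real.rpow_nonneg hz0.le _
          nlinarith [Real.rpow_nonneg (jb_pos z).le (-s')]
      _ = z ^ (-(1/2):ℝ) := mul_one _
  -- bound on ∫ h1 over Ioc 0 M
  have hI01 : ∫ z in Set.Ioc (0:ℝ) 1, h1 z ≤ 2 := by
    have hle : ∫ z in Set.Ioc (0:ℝ) 1, h1 z ≤ ∫ z in Set.Ioc (0:ℝ) 1, z ^ (-(1/2):ℝ) := by
      apply setIntegral_mono_on (hint_h1.mono_set (Set.Ioc_subset_Ioc_right hM1))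
        (hint_half.mono_set (Set.Ioc_subset_Ioc_right hM1)) measurableSet_Ioc
      intro z hz
      have hz0 : 0 < z := hz.1
      have h01 : jb z ^ (-s') ≤ 1 :=
        Real.rpow_le_one_of_one_le_of_nonpos (one_le_jb z) (by linarith)
      have h02 : (0:ℝ) ≤ z ^ (-(1/2):ℝ) := Real.rpow_nonneg hz0.le _
      calc h1 z ≤ z ^ (-(1/2):ℝ) * 1 := by
            rw [hh1def]; nlinarith [Real.rpow_nonneg (jb_pos z).le (-s')]
        _ = z ^ (-(1/2):ℝ) := mul_one _
    have heq : ∫ z in Set.Ioc (0:ℝ) 1, z ^ (-(1/2):ℝ) = 2 := by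
      rw [← intervalIntegral.integral_of_le (by norm_num : (0:ℝ) ≤ 1),
        integral_rpow (Or.inl (by norm_num))]
      norm_num
    linarith
  have hI1M : ∫ z in Set.Ioc (1:ℝ) M, h1 z ≤ M ^ (1/2 - s') * (1/2 - s')⁻¹ := by
    have hintr : IntegrableOn (fun z : ℝ => z ^ (-(1/2) - s')) (Set.Ioc 1 M) :=
      (intervalIntegrable_iff_integrableOn_Ioc_of_le hM1).mp
        (intervalIntegral.intervalIntegrable_rpow' (by linarith))
    have hle : ∫ z in Set.Ioc (1:ℝ) M, h1 z ≤ ∫ z in Set.Ioc (1:ℝ) M, z ^ (-(1/2) - s') := by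
      apply setIntegral_mono_on
        (hint_h1.mono_set (Set.Ioc_subset_Ioc_left (by norm_num))) hintr measurableSet_Ioc
      intro z hz
      have hz1 : 1 ≤ z := hz.1.le
      have hz0 : 0 < z := by linarith
      have hjz : jb z ^ (-s') ≤ z ^ (-s') := by
        refine Real.rpow_le_rpow_of_nonpos hz0 ?_ (by linarith)
        have := abs_le_jb z; rw [abs_of_pos hz0] at this; exact this
      calc h1 z ≤ z ^ (-(1/2):ℝ) * z ^ (-s') := by
            rw [hh1def]
            exact mul_le_mul_of_nonneg_left hjz (Real.rpow_nonneg hz0.le _)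
        _ = z ^ (-(1/2) - s') := by rw [← Real.rpow_add hz0]; ring_nf
    have heq : ∫ z in Set.Ioc (1:ℝ) M, z ^ (-(1/2) - s') ≤ M ^ (1/2 - s') * (1/2 - s')⁻¹ := by
      rw [← intervalIntegral.integral_of_le hM1, integral_rpow (Or.inl (by linarith))]
      rw [Real.one_rpow, show -(1/2) - s' + 1 = 1/2 - s' by ring, div_eq_mul_inv]
      have : M ^ (1/2 - s') - 1 ≤ M ^ (1/2 - s') := by linarith
      exact mul_le_mul_of_nonneg_right this (by positivity)
    linarith
  have hIocM : ∫ z in Set.Ioc (0:ℝ) M, h1 z ≤ 2 + M ^ (1/2 - s') * (1/2 - s')⁻¹ := by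
    have hsplit : ∫ z in Set.Ioc (0:ℝ) M, h1 z
        = (∫ z in Set.Ioc (0:ℝ) 1, h1 z) + ∫ z in Set.Ioc (1:ℝ) M, h1 z := by
      rw [← Set.Ioc_union_Ioc_eq_Ioc (by norm_num : (0:ℝ) ≤ 1) hM1]
      exact setIntegral_union (Set.Ioc_disjoint_Ioc_of_le le_rfl) measurableSet_Ioc
        (hint_h1.mono_set (Set.Ioc_subset_Ioc_right hM1))
        (hint_h1.mono_set (Set.Ioc_subset_Ioc_left (by norm_num)))
    rw [hsplit]; exact add_le_add hI01 hI1M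
  -- pointwise bound on region I
  have hPB1 : ∀ z ∈ Set.Ioc (0:ℝ) T,
      F z ≤ 2^(2*b) * jb τ ^ (-(2*b)) * h1 z := by
    rintro z ⟨hz0, hzT⟩
    have hzT' : z ≤ |τ| / 2 := by rwa [hTdef] at hzT
    have habs : |τ| / 2 ≤ |z + τ| := by
      rcases le_or_gt 0 τ with h | h
      · rw [abs_of_nonneg (by linarith : (0:ℝ) ≤ z + τ), abs_of_nonneg h]; linarith
      · rw [abs_of_neg h] at hzT' ⊢
        rw [abs_of_nonpos (by linarith : z + τ ≤ 0)]
        linarith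
    have hjzτ : jb τ / 2 ≤ jb (z + τ) := by
      have h2 := jb_half |τ|
      rw [jb_abs] at h2
      have h3 : jb (|τ|/2) ≤ jb (z + τ) := by
        apply jb_mono
        rwa [abs_of_nonneg (by positivity : (0:ℝ) ≤ |τ|/2)]
      linarith
    have hsq0 : 0 < Real.sqrt z := Real.sqrt_pos.mpr hz0
    have hA0 : (0:ℝ) < jb z ^ s' := Real.rpow_pos_of_pos (jb_pos z) _
    have hB0 : (0:ℝ) < (jb τ / 2) ^ (2*b) := Real.rpow_pos_of_pos (by positivity) _
    have hden1 : jb z ^ s' ≤ jb z ^ s :=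
      Real.rpow_le_rpow_of_exponent_le (one_le_jb z) hs's
    have hden2 : (jb τ / 2) ^ (2*b) ≤ jb (z+τ) ^ (2*b) :=
      Real.rpow_le_rpow (by positivity) hjzτ (by linarith)
    have key : F z ≤ 1 / (jb z ^ s' * (jb τ / 2) ^ (2*b) * Real.sqrt z) := by
      rw [hF]
      apply one_div_le_one_div_of_le (mul_pos (mul_pos hA0 hB0) hsq0)
      exact mul_le_mul (mul_le_mul hden1 hden2 hB0.le (Real.rpow_nonneg (jb_pos z).le s))
        le_rfl hsq0.le (mul_nonneg (Real.rpow_nonneg (jb_pos z).le s)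
          (Real.rpow_nonneg (jb_pos _).le _))
    have hEq : 1 / (jb z ^ s' * (jb τ / 2) ^ (2*b) * Real.sqrt z)
        = 2^(2*b) * jb τ ^ (-(2*b)) * (z ^ (-(1/2):ℝ) * jb z ^ (-s')) := by
      rw [Real.div_rpow hjτ0.le (by norm_num : (0:ℝ) ≤ 2),
        Real.rpow_neg hjτ0.le, Real.rpow_neg (jb_pos z).le, Real.rpow_neg hz0.le,
        Real.sqrt_eq_rpow]
      have h20 : ((2:ℝ)) ^ (2*b) ≠ 0 := (Real.rpow_pos_of_pos (by norm_num) _).ne'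
      have hz12 : (z:ℝ) ^ ((1:ℝ)/2) ≠ 0 := (Real.rpow_pos_of_pos hz0 _).ne'
      have hjs' : jb z ^ s' ≠ 0 := hA0.ne'
      have hjτ2b : jb τ ^ (2*b) ≠ 0 := (Real.rpow_pos_of_pos hjτ0 _).ne'
      field_simp
    exact key.trans hEq.le
  -- integrable majorant on region I
  have hmaj1int : IntegrableOn (fun z => 2^(2*b) * jb τ ^ (-(2*b)) * h1 z) (Set.Ioc 0 T) :=
    ((hint_h1.mono_set (Set.Ioc_subset_Ioc_right (le_max_left T 1))).const_mul _)
  have hintF1 : IntegrableOn F (Set.Ioc 0 T) := by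
    apply hmaj1int.mono' hFmeas.aestronglyMeasurable
    refine ae_restrict_of_forall_mem measurableSet_Ioc (fun z hz => ?_)
    rw [Real.norm_eq_abs, abs_of_nonneg (hFnn z)]
    exact hPB1 z hz
  -- region I integral bound
  have hR1 : ∫ z in Set.Ioc (0:ℝ) T, F z
      ≤ 2^(2*b) * (2 + (1/2 - s')⁻¹) * jb τ ^ (-(s + 1/2)) := by
    have c0 : (0:ℝ) ≤ 2^(2*b) * jb τ ^ (-(2*b)) := by positivity
    have step1 : ∫ z in Set.Ioc (0:ℝ) T, F z
        ≤ 2^(2*b) * jb τ ^ (-(2*b)) * ∫ z in Set.Ioc (0:ℝ) T, h1 z := by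
      rw [← integral_const_mul]
      exact setIntegral_mono_on hintF1 hmaj1int measurableSet_Ioc hPB1
    have step2 : ∫ z in Set.Ioc (0:ℝ) T, h1 z ≤ 2 + jb τ ^ (1/2 - s') * (1/2 - s')⁻¹ := by
      have hmono : ∫ z in Set.Ioc (0:ℝ) T, h1 z ≤ ∫ z in Set.Ioc (0:ℝ) M, h1 z := by
        apply setIntegral_mono_set hint_h1
        · refine ae_restrict_of_forall_mem measurableSet_Ioc (fun z hz => ?_)
          have hz0 : 0 < z := hz.1
          exact mul_nonneg (Real.rpow_nonneg hz0.le _) (Real.rpow_nonneg (jb_pos z).le _)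
        · exact (Set.Ioc_subset_Ioc_right (le_max_left T 1)).eventuallyLE
      have hMr : M ^ (1/2 - s') ≤ jb τ ^ (1/2 - s') :=
        Real.rpow_le_rpow hM0.le hMτ (by linarith)
      have : M ^ (1/2 - s') * (1/2 - s')⁻¹ ≤ jb τ ^ (1/2 - s') * (1/2 - s')⁻¹ :=
        mul_le_mul_of_nonneg_right hMr (inv_nonneg.mpr hinv0.le)
      linarith
    have step3 : 2^(2*b) * jb τ ^ (-(2*b)) * (2 + jb τ ^ (1/2 - s') * (1/2 - s')⁻¹)
        ≤ 2^(2*b) * (2 + (1/2 - s')⁻¹) * jb τ ^ (-(s + 1/2)) := by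
      have e1 : jb τ ^ (-(2*b)) ≤ jb τ ^ (-(s + 1/2)) :=
        Real.rpow_le_rpow_of_exponent_le hjτ1 (by linarith)
      have e2 : jb τ ^ (1/2 - s') * jb τ ^ (-(2*b)) ≤ jb τ ^ (-(s + 1/2)) := by
        rw [← Real.rpow_add hjτ0]
        exact Real.rpow_le_rpow_of_exponent_le hjτ1 (by linarith)
      have h2b0 : (0:ℝ) < 2^(2*b) := Real.rpow_pos_of_pos (by norm_num) _
      calc 2^(2*b) * jb τ ^ (-(2*b)) * (2 + jb τ ^ (1/2 - s') * (1/2 - s')⁻¹)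
          = 2^(2*b) * (2 * jb τ ^ (-(2*b))
            + (1/2 - s')⁻¹ * (jb τ ^ (1/2 - s') * jb τ ^ (-(2*b)))) := by ring
        _ ≤ 2^(2*b) * (2 * jb τ ^ (-(s + 1/2)) + (1/2 - s')⁻¹ * jb τ ^ (-(s + 1/2))) := by
            refine mul_le_mul_of_nonneg_left ?_ h2b0.le
            exact add_le_add (by linarith)
              (mul_le_mul_of_nonneg_left e2 (inv_nonneg.mpr hinv0.le))
        _ = 2^(2*b) * (2 + (1/2 - s')⁻¹) * jb τ ^ (-(s + 1/2)) := by ring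
    calc ∫ z in Set.Ioc (0:ℝ) T, F z
        ≤ 2^(2*b) * jb τ ^ (-(2*b)) * ∫ z in Set.Ioc (0:ℝ) T, h1 z := step1
      _ ≤ 2^(2*b) * jb τ ^ (-(2*b)) * (2 + jb τ ^ (1/2 - s') * (1/2 - s')⁻¹) :=
          mul_le_mul_of_nonneg_left step2 c0
      _ ≤ 2^(2*b) * (2 + (1/2 - s')⁻¹) * jb τ ^ (-(s + 1/2)) := step3
  -- region II
  have hgτint : Integrable (fun z : ℝ => ((1:ℝ) + (z + τ)^2) ^ (-b)) :=
    hK2int.comp_add_right τ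
  have hPB2 : ∀ z ∈ Set.Ioi T,
      F z ≤ 2^(s + 3/4) * jb τ ^ (-(s + 1/2)) * ((1:ℝ) + (z + τ)^2) ^ (-b) := by
    intro z hz
    have hzT : T < z := hz
    have hz0 : 0 < z := lt_trans hT0 hzT
    have hjz : jb τ / 2 ≤ jb z := by
      have h2 := jb_half |τ|
      rw [jb_abs] at h2
      have h3 : jb (|τ|/2) ≤ jb z := by
        apply jb_mono
        rw [abs_of_nonneg (by positivity : (0:ℝ) ≤ |τ|/2), abs_of_pos hz0]
        rw [hTdef] at hzT; linarith
      linarith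
    have hz' : jb τ * 2 ^ (-(3/2):ℝ) ≤ z := by
      have hs2 : Real.sqrt 2 = 2 ^ ((1:ℝ)/2) := Real.sqrt_eq_rpow 2
      have h1τ : jb τ ≤ 2 ^ ((1:ℝ)/2) * |τ| := by
        have := jb_le_sqrt2_mul_abs hτ.le
        rwa [hs2] at this
      have hmul : (2:ℝ) ^ ((1:ℝ)/2) * 2 ^ (-(3/2):ℝ) = 2⁻¹ := by
        rw [← Real.rpow_add (by norm_num : (0:ℝ) < 2)]
        norm_num
      have hpow : (0:ℝ) < 2 ^ (-(3/2):ℝ) := Real.rpow_pos_of_pos (by norm_num) _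
      have : jb τ * 2 ^ (-(3/2):ℝ) ≤ (2 ^ ((1:ℝ)/2) * |τ|) * 2 ^ (-(3/2):ℝ) :=
        mul_le_mul_of_nonneg_right h1τ hpow.le
      have heq : (2 ^ ((1:ℝ)/2) * |τ|) * 2 ^ (-(3/2):ℝ) = |τ| / 2 := by
        rw [mul_comm ((2:ℝ) ^ ((1:ℝ)/2)) |τ|, mul_assoc, hmul]; ring
      rw [heq] at this
      rw [hTdef] at hzT
      linarith
    have hsq : jb τ ^ ((1:ℝ)/2) * 2 ^ (-(3/4):ℝ) ≤ Real.sqrt z := by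
      have h1 : Real.sqrt (jb τ * 2 ^ (-(3/2):ℝ)) ≤ Real.sqrt z := Real.sqrt_le_sqrt hz'
      have h2 : Real.sqrt (jb τ * 2 ^ (-(3/2):ℝ))
          = jb τ ^ ((1:ℝ)/2) * 2 ^ (-(3/4):ℝ) := by
        rw [Real.sqrt_mul hjτ0.le, Real.sqrt_eq_rpow, Real.sqrt_eq_rpow,
          ← Real.rpow_mul (by norm_num : (0:ℝ) ≤ 2)]
        norm_num
      rwa [h2] at h1
    have hA0 : (0:ℝ) < (jb τ / 2) ^ s := Real.rpow_pos_of_pos (by positivity) _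
    have hB0 : (0:ℝ) < jb (z+τ) ^ (2*b) := Real.rpow_pos_of_pos (jb_pos _) _
    have hC0 : (0:ℝ) < jb τ ^ ((1:ℝ)/2) * 2 ^ (-(3/4):ℝ) := by
      have := Real.rpow_pos_of_pos hjτ0 ((1:ℝ)/2)
      have := Real.rpow_pos_of_pos (by norm_num : (0:ℝ) < 2) (-(3/4):ℝ)
      positivity
    have hdenA : (jb τ / 2) ^ s ≤ jb z ^ s :=
      Real.rpow_le_rpow (by positivity) hjz hs
    have key : F z ≤ 1 / ((jb τ / 2) ^ s * jb (z+τ) ^ (2*b)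
        * (jb τ ^ ((1:ℝ)/2) * 2 ^ (-(3/4):ℝ))) := by
      rw [hF]
      apply one_div_le_one_div_of_le (mul_pos (mul_pos hA0 hB0) hC0)
      exact mul_le_mul (mul_le_mul hdenA le_rfl hB0.le (Real.rpow_nonneg (jb_pos z).le s))
        hsq hC0.le (mul_nonneg (Real.rpow_nonneg (jb_pos z).le s)
          (Real.rpow_nonneg (jb_pos _).le _))
    have hjbzb : jb (z+τ) ^ (2*b) = ((1:ℝ) + (z+τ)^2) ^ b := by
      rw [jb_rpow]; congr 1; ring
    have hEq : 1 / ((jb τ / 2) ^ s * jb (z+τ) ^ (2*b)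
        * (jb τ ^ ((1:ℝ)/2) * 2 ^ (-(3/4):ℝ)))
        = 2^(s + 3/4) * jb τ ^ (-(s + 1/2)) * ((1:ℝ) + (z + τ)^2) ^ (-b) := by
      rw [hjbzb, Real.div_rpow hjτ0.le (by norm_num : (0:ℝ) ≤ 2),
        Real.rpow_neg hjτ0.le, Real.rpow_neg (by positivity : (0:ℝ) ≤ 1 + (z+τ)^2),
        Real.rpow_neg (by norm_num : (0:ℝ) ≤ 2),
        show s + 3/4 = s + 3/4 by rfl,
        Real.rpow_add (by norm_num : (0:ℝ) < 2) s (3/4),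
        Real.rpow_add hjτ0 s (1/2)]
      have n1 : jb τ ^ s ≠ 0 := (Real.rpow_pos_of_pos hjτ0 _).ne'
      have n2 : jb τ ^ ((1:ℝ)/2) ≠ 0 := (Real.rpow_pos_of_pos hjτ0 _).ne'
      have n3 : ((1:ℝ) + (z+τ)^2) ^ b ≠ 0 :=
        (Real.rpow_pos_of_pos (by positivity) _).ne'
      have n4 : (2:ℝ) ^ s ≠ 0 := (Real.rpow_pos_of_pos (by norm_num) _).ne'
      have n5 : (2:ℝ) ^ ((3:ℝ)/4) ≠ 0 := (Real.rpow_pos_of_pos (by norm_num) _).ne'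
      field_simp
    exact key.trans hEq.le
  have hmaj2int : IntegrableOn
      (fun z => 2^(s + 3/4) * jb τ ^ (-(s + 1/2)) * ((1:ℝ) + (z + τ)^2) ^ (-b))
      (Set.Ioi T) := (hgτint.const_mul _).integrableOn
  have hintF2 : IntegrableOn F (Set.Ioi T) := by
    apply hmaj2int.mono' hFmeas.aestronglyMeasurable
    refine ae_restrict_of_forall_mem measurableSet_Ioi (fun z hz => ?_)
    rw [Real.norm_eq_abs, abs_of_nonneg (hFnn z)]
    exact hPB2 z hz
  have hR2 : ∫ z in Set.Ioi T, F z ≤ 2^(s + 3/4) * K2 * jb τ ^ (-(s + 1/2)) := by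
    have step1 : ∫ z in Set.Ioi T, F z
        ≤ 2^(s + 3/4) * jb τ ^ (-(s + 1/2)) * ∫ z in Set.Ioi T, ((1:ℝ) + (z + τ)^2) ^ (-b) := by
      rw [← integral_const_mul]
      exact setIntegral_mono_on hintF2 hmaj2int measurableSet_Ioi hPB2
    have step2 : ∫ z in Set.Ioi T, ((1:ℝ) + (z + τ)^2) ^ (-b) ≤ K2 := by
      have h1 : ∫ z in Set.Ioi T, ((1:ℝ) + (z + τ)^2) ^ (-b)
          ≤ ∫ z : ℝ, ((1:ℝ) + (z + τ)^2) ^ (-b) :=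
        setIntegral_le_integral hgτint
          (Filter.Eventually.of_forall fun z => Real.rpow_nonneg (by positivity) _)
      have h2 : ∫ z : ℝ, ((1:ℝ) + (z + τ)^2) ^ (-b) = K2 := by
        rw [hK2def]
        exact integral_add_right_eq_self (fun u : ℝ => ((1:ℝ) + u^2) ^ (-b)) τ
      linarith
    have c0 : (0:ℝ) ≤ 2^(s + 3/4) * jb τ ^ (-(s + 1/2)) := by positivity
    calc ∫ z in Set.Ioi T, F z
        ≤ 2^(s + 3/4) * jb τ ^ (-(s + 1/2)) * ∫ z in Set.Ioi T, ((1:ℝ) + (z + τ)^2) ^ (-b) :=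
          step1
      _ ≤ 2^(s + 3/4) * jb τ ^ (-(s + 1/2)) * K2 := mul_le_mul_of_nonneg_left step2 c0
      _ = 2^(s + 3/4) * K2 * jb τ ^ (-(s + 1/2)) := by ring
  have hsplit : ∫ z in Set.Ioi (0:ℝ), F z
      = (∫ z in Set.Ioc (0:ℝ) T, F z) + ∫ z in Set.Ioi T, F z := by
    rw [← Set.Ioc_union_Ioi_eq_Ioi hT0.le]
    exact setIntegral_union Set.Ioc_disjoint_Ioi_same measurableSet_Ioi hintF1 hintF2
  calc ∫ z in Set.Ioi (0:ℝ), F z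
      = (∫ z in Set.Ioc (0:ℝ) T, F z) + ∫ z in Set.Ioi T, F z := hsplit
    _ ≤ 2^(2*b) * (2 + (1/2 - s')⁻¹) * jb τ ^ (-(s + 1/2))
        + 2^(s + 3/4) * K2 * jb τ ^ (-(s + 1/2)) := add_le_add hR1 hR2
    _ = (2^(2*b) * (2 + (1/2 - s')⁻¹) + 2^(s + 3/4) * K2) * jb τ ^ (-(s + 1/2)) := by ring
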